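/- Let ζ ∈ ℂ be a root of unity of exact order m, let n = h·m, and let a, b ∈ GL(n,ℂ) satisfy a b a⁻¹ b⁻¹ = ζ·I_n. Assume the unital subalgebra of M_n(ℂ) generated by a, a⁻¹, b, b⁻¹ is a semisimple ring. Then there exist g ∈ GL(n,ℂ), invertible diagonal matrices d₁, d₂ ∈ GL(h,ℂ), and matrices P, Q ∈ GL(m,ℂ) with P Q P⁻¹ Q⁻¹ = ζ·I_m, such that g a g⁻¹ = d₁ ⊗ P and g b g⁻¹ = d₂ ⊗ Q, where ⊗ denotes the Kronecker product of matrices. -/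

import Mathlib

open Kronecker

namespace RedPair
open Matrix Module



variable {m : ℕ} {ζ : ℂ} {V : Type} [AddCommGroup V] [Module ℂ V] [FiniteDimensional ℂ V]

lemma comm_pow (fa fb : Module.End ℂ V) (hcomm : fa * fb = ζ • (fb * fa)) (k : ℕ) :
    fa * fb ^ k = (ζ ^ k) • (fb ^ k * fa) := by
  induction k with
  | zero => simp
  | succ k ih =>
    calc fa * fb ^ (k+1) = (fa * fb ^ k) * fb := by rw [pow_succ, mul_assoc]
    _ = (ζ ^ k • (fb ^ k * fa)) * fb := by rw [ih]
    _ = ζ ^ k • (fb ^ k * (fa * fb)) := by rw [smul_mul_assoc, mul_assoc]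
    _ = ζ ^ k • (fb ^ k * (ζ • (fb * fa))) := by rw [hcomm]
    _ = ζ ^ (k+1) • (fb ^ (k+1) * fa) := by
        rw [mul_smul_comm, smul_smul, ← pow_succ, ← mul_assoc, ← pow_succ]

lemma pow_mem (fb : Module.End ℂ V) (W : Submodule ℂ V) (hWb : ∀ x ∈ W, fb x ∈ W)
    (k : ℕ) : ∀ x ∈ W, (fb ^ k) x ∈ W := by
  induction k with
  | zero => simpa using fun x hx => hx
  | succ k ih =>
    intro x hx
    rw [pow_succ, Module.End.mul_apply]
    exact ih _ (hWb x hx)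

lemma pow_inj (fb : Module.End ℂ V) (hfb : Function.Injective fb) (k : ℕ) :
    Function.Injective (fb ^ k : Module.End ℂ V) := by
  induction k with
  | zero => simpa [Module.End.coe_one] using Function.injective_id
  | succ k ih =>
    intro x y hxy
    rw [pow_succ, Module.End.mul_apply, Module.End.mul_apply] at hxy
    exact hfb (ih hxy)

lemma cyclic [NeZero m] (hζ : IsPrimitiveRoot ζ m)
    (fa fb : Module.End ℂ V) (hfa : Function.Injective fa) (hfb : Function.Injective fb)
    (hcomm : fa * fb = ζ • (fb * fa))
    (W : Submodule ℂ V) (hW : W ≠ ⊥)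
    (hWa : ∀ x ∈ W, fa x ∈ W) (hWb : ∀ x ∈ W, fb x ∈ W) :
    ∃ (α μ : ℂˣ) (w : Fin m → V), (∀ k, w k ∈ W) ∧ LinearIndependent ℂ w ∧
      (∀ k, fa (w k) = ((α : ℂ) * ζ ^ (k : ℕ)) • w k) ∧
      (∀ k, fb (w k) = (μ : ℂ) • w (k + 1)) := by
  have hm : 0 < m := Nat.pos_of_ne_zero (NeZero.ne m)
  haveI : Nontrivial W := Submodule.nontrivial_iff_ne_bot.mpr hW
  obtain ⟨α₀, hα₀⟩ := Module.End.exists_eigenvalue (fa.restrict hWa)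
  obtain ⟨u, hu⟩ := hα₀.exists_hasEigenvector
  have hufa : fa (u : V) = α₀ • (u : V) := by
    have h2 := congrArg (Subtype.val) hu.apply_eq_smul
    simpa [LinearMap.restrict_apply] using h2
  have hune : (u : V) ≠ 0 := fun h => hu.2 (Subtype.ext h)
  have hα₀ne : α₀ ≠ 0 := by
    intro h
    exact hune (hfa (by rw [hufa, h, zero_smul, map_zero]))
  set E : Submodule ℂ V := W ⊓ LinearMap.ker (fa - α₀ • 1) with hE
  have memE : ∀ x, x ∈ E ↔ (x ∈ W ∧ fa x = α₀ • x) := by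
    intro x
    simp [hE, LinearMap.mem_ker, sub_eq_zero]
  set gb : Module.End ℂ V := fb ^ m with hgb
  have hfagb : fa * gb = gb * fa := by
    rw [hgb, comm_pow fa fb hcomm m, hζ.pow_eq_one, one_smul]
  have hEgb : ∀ x ∈ E, gb x ∈ E := by
    intro x hx
    rw [memE] at hx ⊢
    refine ⟨pow_mem fb W hWb m x hx.1, ?_⟩
    have h3 : (fa * gb) x = (gb * fa) x := by rw [hfagb]
    rw [Module.End.mul_apply, Module.End.mul_apply] at h3
    rw [h3, hx.2, _root_.map_smul]
  haveI : Nontrivial E := by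
    refine ⟨⟨⟨(u : V), ?_⟩, 0, ?_⟩⟩
    · rw [memE]; exact ⟨u.2, hufa⟩
    · intro h
      exact hune (congrArg Subtype.val h)
  obtain ⟨β, hβ⟩ := Module.End.exists_eigenvalue (gb.restrict hEgb)
  obtain ⟨v, hv⟩ := hβ.exists_hasEigenvector
  have hvgb : gb (v : V) = β • (v : V) := by
    have h2 := congrArg (Subtype.val) hv.apply_eq_smul
    simpa [LinearMap.restrict_apply] using h2
  have hvne : (v : V) ≠ 0 := fun h => hv.2 (Subtype.ext h)
  have hvE : (v : V) ∈ E := v.2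
  rw [memE] at hvE
  obtain ⟨hvW, hvfa⟩ := hvE
  have hgbinj : Function.Injective gb := pow_inj fb hfb m
  have hβne : β ≠ 0 := by
    intro h
    exact hvne (hgbinj (by rw [hvgb, h, zero_smul, map_zero]))
  obtain ⟨μ₀, hμ₀⟩ := IsAlgClosed.exists_pow_nat_eq β hm
  have hμ₀ne : μ₀ ≠ 0 := by
    intro h
    exact hβne (by rw [← hμ₀, h, zero_pow hm.ne'])
  set w : Fin m → V := fun k => (μ₀⁻¹) ^ (k : ℕ) • (fb ^ (k : ℕ)) (v : V) with hw
  have hwW : ∀ k, w k ∈ W := fun k =>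
    Submodule.smul_mem _ _ (pow_mem fb W hWb _ _ hvW)
  have hwfa : ∀ k, fa (w k) = (α₀ * ζ ^ (k : ℕ)) • w k := by
    intro k
    have h4 : fa ((fb ^ (k : ℕ)) (v : V)) = (ζ ^ (k : ℕ) * α₀) • (fb ^ (k : ℕ)) (v : V) := by
      have h1 : (fa * fb ^ (k : ℕ)) (v : V) = ((ζ ^ (k:ℕ)) • (fb ^ (k:ℕ) * fa)) (v : V) := by
        rw [comm_pow fa fb hcomm]
      simp only [Module.End.mul_apply, LinearMap.smul_apply] at h1
      rw [h1, hvfa, _root_.map_smul, smul_smul]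
    rw [hw]
    simp only [_root_.map_smul]
    rw [h4, smul_smul, smul_smul]
    ring_nf
  have hwne : ∀ k, w k ≠ 0 := by
    intro k
    rw [hw]
    simp only
    apply smul_ne_zero (pow_ne_zero _ (inv_ne_zero hμ₀ne))
    intro h
    exact hvne (pow_inj fb hfb _ (by rw [h, map_zero]))
  have hwfb : ∀ k, fb (w k) = μ₀ • w (k + 1) := by
    intro k
    have hfb1 : fb (w k) = μ₀⁻¹ ^ (k : ℕ) • (fb ^ ((k : ℕ) + 1)) (v : V) := by
      rw [hw]
      simp only [_root_.map_smul]
      rw [pow_succ', Module.End.mul_apply]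
    have hval : ((k + 1 : Fin m) : ℕ) = ((k : ℕ) + 1) % m := by
      rw [Fin.add_def, Fin.val_one']
      conv_rhs => rw [Nat.add_mod]
      rw [Nat.mod_eq_of_lt k.isLt]
    by_cases hk : (k : ℕ) + 1 = m
    · have hk1 : ((k + 1 : Fin m) : ℕ) = 0 := by
        rw [hval, hk, Nat.mod_self]
      have hwk1 : w (k + 1) = (v : V) := by
        rw [hw]
        simp only [hk1, pow_zero, one_smul, Module.End.one_apply]
      have hfbm : (fb ^ ((k : ℕ) + 1)) (v : V) = β • (v : V) := by rw [hk, ← hgb, hvgb]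
      rw [hfb1, hfbm, hwk1, smul_smul, ← hμ₀]
      congr 1
      have h5 : μ₀ ^ m = μ₀ ^ (k : ℕ) * μ₀ := by rw [← pow_succ, hk]
      rw [h5, ← mul_assoc, ← mul_pow, inv_mul_cancel₀ hμ₀ne, one_pow, one_mul]
    · have hk1 : ((k + 1 : Fin m) : ℕ) = (k : ℕ) + 1 := by
        rw [hval]
        exact Nat.mod_eq_of_lt (by have := k.isLt; omega)
      rw [hfb1, hw]
      simp only [hk1]
      rw [smul_smul]
      congr 1
      rw [pow_succ]
      field_simp
  have hli : LinearIndependent ℂ w := by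
    apply Module.End.eigenvectors_linearIndependent' fa (fun k : Fin m => α₀ * ζ ^ (k : ℕ))
    · intro k l hkl
      have := mul_left_cancel₀ hα₀ne hkl
      exact Fin.ext (hζ.pow_inj k.isLt l.isLt this)
    · intro k
      exact ⟨Module.End.mem_eigenspace_iff.mpr (hwfa k), hwne k⟩
  exact ⟨Units.mk0 α₀ hα₀ne, Units.mk0 μ₀ hμ₀ne, w, hwW, hli, hwfa, hwfb⟩




set_option synthInstance.maxHeartbeats 1000000 in
set_option maxHeartbeats 1000000 in
lemma exists_inv_complement (N : ℕ) (gens : Set (Matrix (Fin N) (Fin N) ℂ))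
    (hss : IsSemisimpleRing (Algebra.adjoin ℂ gens))
    (S W : Submodule ℂ (Fin N → ℂ))
    (hS : ∀ M ∈ gens, ∀ x ∈ S, M.mulVec x ∈ S)
    (hWinv : ∀ M ∈ gens, ∀ x ∈ W, M.mulVec x ∈ W)
    (hSW : S ≤ W) :
    ∃ T : Submodule ℂ (Fin N → ℂ), (∀ M ∈ gens, ∀ x ∈ T, M.mulVec x ∈ T) ∧
      T ≤ W ∧ S ⊓ T = ⊥ ∧ S ⊔ T = W := by
  classical
  set A := Algebra.adjoin ℂ gens with hA
  let ρ : A →ₐ[ℂ] ((Fin N → ℂ) →ₗ[ℂ] (Fin N → ℂ)) :=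
    (Matrix.toLinAlgEquiv'.toAlgHom.comp A.val)
  letI : Module A (Fin N → ℂ) := Module.compHom _ ρ.toRingHom
  have hsmul : ∀ (x : A) (v : Fin N → ℂ), x • v = (x : Matrix (Fin N) (Fin N) ℂ).mulVec v := by
    intro x v
    rfl
  letI : IsScalarTower ℂ A (Fin N → ℂ) := by
    constructor
    intro c x v
    rw [hsmul, hsmul]
    show ((c • x : A) : Matrix (Fin N) (Fin N) ℂ).mulVec v = _
    rw [Subalgebra.coe_smul, Matrix.smul_mulVec]
  have hadj : ∀ (M : Matrix (Fin N) (Fin N) ℂ), M ∈ A → ∀ y ∈ S, M.mulVec y ∈ S := by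
    intro M hM
    induction hM using Algebra.adjoin_induction with
    | mem x hx => exact hS x hx
    | algebraMap r =>
      intro y hy
      rw [Algebra.algebraMap_eq_smul_one, Matrix.smul_mulVec, Matrix.one_mulVec]
      exact S.smul_mem r hy
    | add x y hx hy ihx ihy =>
      intro z hz
      rw [Matrix.add_mulVec]
      exact S.add_mem (ihx z hz) (ihy z hz)
    | mul x y hx hy ihx ihy =>
      intro z hz
      rw [← Matrix.mulVec_mulVec]
      exact ihx _ (ihy z hz)
  let S' : Submodule A (Fin N → ℂ) :=
    { carrier := S
      add_mem' := fun hx hy => S.add_mem hx hy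
      zero_mem' := S.zero_mem
      smul_mem' := by
        intro c x hx
        rw [SetLike.mem_coe] at hx ⊢
        change (c : Matrix (Fin N) (Fin N) ℂ).mulVec x ∈ S
        exact hadj (c : Matrix (Fin N) (Fin N) ℂ) c.2 x hx }
  haveI := hss
  haveI : IsSemisimpleModule A (Fin N → ℂ) := inferInstance
  obtain ⟨T', hT'⟩ := exists_isCompl S'
  let Tc : Submodule ℂ (Fin N → ℂ) := @Submodule.restrictScalars ℂ A _ _ _ _ _ _ _ ‹IsScalarTower ℂ A (Fin N → ℂ)› T'
  refine ⟨Tc ⊓ W, ?_, inf_le_right, ?_, ?_⟩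
  · intro M hM x hx
    refine ⟨?_, hWinv M hM x hx.2⟩
    have : (⟨M, Algebra.subset_adjoin hM⟩ : A) • x ∈ T' := T'.smul_mem _ hx.1
    rwa [hsmul] at this
  · rw [eq_bot_iff]
    intro x hx
    have h1 : x ∈ S' ⊓ T' := ⟨hx.1, hx.2.1⟩
    rw [hT'.inf_eq_bot] at h1
    exact h1
  · have h1 : S ⊔ Tc = ⊤ := by
      rw [eq_top_iff]
      intro x _
      have h2 : x ∈ S' ⊔ T' := by rw [hT'.sup_eq_top]; trivial
      obtain ⟨s, hs, t, ht, rfl⟩ := Submodule.mem_sup.mp h2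
      exact Submodule.mem_sup.mpr ⟨s, hs, t, ht, rfl⟩
    rw [← sup_inf_assoc_of_le Tc hSW, h1, top_inf_eq]


variable {N : ℕ}

lemma decomp_aux [NeZero m] (hζ : IsPrimitiveRoot ζ m)
    (A0 A1 B0 B1 : Matrix (Fin N) (Fin N) ℂ)
    (hss : IsSemisimpleRing (Algebra.adjoin ℂ ({A0, A1, B0, B1} : Set (Matrix (Fin N) (Fin N) ℂ))))
    (hA : A1 * A0 = 1) (hB : B1 * B0 = 1)
    (hcommM : A0 * B0 = ζ • (B0 * A0)) :
    ∀ (n : ℕ) (W : Submodule ℂ (Fin N → ℂ)), Module.finrank ℂ W = n →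
    (∀ M ∈ ({A0, A1, B0, B1} : Set (Matrix (Fin N) (Fin N) ℂ)), ∀ x ∈ W, M.mulVec x ∈ W) →
    ∃ (ι : Type) (_ : Fintype ι) (α μ : ι → ℂˣ) (e : ι × Fin m → (Fin N → ℂ)),
      (∀ p, e p ∈ W) ∧ LinearIndependent ℂ e ∧ W ≤ Submodule.span ℂ (Set.range e) ∧
      (∀ p, A0.mulVec (e p) = ((α p.1 : ℂ) * ζ ^ ((p.2 : ℕ))) • e p) ∧
      (∀ p, B0.mulVec (e p) = (μ p.1 : ℂ) • e (p.1, p.2 + 1)) := by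
  have hm : 0 < m := Nat.pos_of_ne_zero (NeZero.ne m)
  have hζ0 : ζ ≠ 0 := fun h => one_ne_zero (α := ℂ)
    (by rw [← hζ.pow_eq_one, h, zero_pow hm.ne'])
  intro n
  induction n using Nat.strong_induction_on with
  | _ n IH =>
  intro W hWrank hWinv
  by_cases hWbot : W = ⊥
  · refine ⟨PEmpty, inferInstance, fun p => p.elim, fun p => p.elim, fun p => p.1.elim, ?_, ?_,
      ?_, fun p => p.1.elim, fun p => p.1.elim⟩
    · intro p; exact p.1.elim
    · exact linearIndependent_empty_type
    · rw [hWbot]; exact bot_le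
  · set fa : Module.End ℂ (Fin N → ℂ) := Matrix.mulVecLin A0 with hfa_def
    set fb : Module.End ℂ (Fin N → ℂ) := Matrix.mulVecLin B0 with hfb_def
    have hfa_app : ∀ x, fa x = A0.mulVec x := fun x => rfl
    have hfb_app : ∀ x, fb x = B0.mulVec x := fun x => rfl
    have hmemA0 : A0 ∈ ({A0, A1, B0, B1} : Set (Matrix (Fin N) (Fin N) ℂ)) := by simp
    have hmemA1 : A1 ∈ ({A0, A1, B0, B1} : Set (Matrix (Fin N) (Fin N) ℂ)) := by simp
    have hmemB0 : B0 ∈ ({A0, A1, B0, B1} : Set (Matrix (Fin N) (Fin N) ℂ)) := by simp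
    have hmemB1 : B1 ∈ ({A0, A1, B0, B1} : Set (Matrix (Fin N) (Fin N) ℂ)) := by simp
    have hfa_inj : Function.Injective fa := by
      intro x y hxy
      have h2 := congrArg (fun t => A1.mulVec t) hxy
      simpa [hfa_app, Matrix.mulVec_mulVec, hA, Matrix.one_mulVec] using h2
    have hfb_inj : Function.Injective fb := by
      intro x y hxy
      have h2 := congrArg (fun t => B1.mulVec t) hxy
      simpa [hfb_app, Matrix.mulVec_mulVec, hB, Matrix.one_mulVec] using h2
    have hcomm : fa * fb = ζ • (fb * fa) := by
      apply LinearMap.ext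
      intro x
      simp only [Module.End.mul_apply, LinearMap.smul_apply, hfa_app, hfb_app]
      rw [Matrix.mulVec_mulVec, Matrix.mulVec_mulVec, hcommM, Matrix.smul_mulVec]
    obtain ⟨α₀, μ₀, w, hwW, hwli, hwfa, hwfb⟩ := cyclic hζ fa fb hfa_inj hfb_inj hcomm W hWbot
      (fun x hx => hWinv A0 hmemA0 x hx) (fun x hx => hWinv B0 hmemB0 x hx)
    set S := Submodule.span ℂ (Set.range w) with hS_def
    have hSW : S ≤ W := Submodule.span_le.mpr (by rintro _ ⟨k, rfl⟩; exact hwW k)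
    have hwmemS : ∀ k, w k ∈ S := fun k => Submodule.subset_span ⟨k, rfl⟩
    have hc_ne : ∀ k : Fin m, (α₀ : ℂ) * ζ ^ (k : ℕ) ≠ 0 :=
      fun k => mul_ne_zero α₀.ne_zero (pow_ne_zero _ hζ0)
    -- generators act on the w k within S
    have hgenS : ∀ M ∈ ({A0, A1, B0, B1} : Set (Matrix (Fin N) (Fin N) ℂ)),
        ∀ k, M.mulVec (w k) ∈ S := by
      intro M hM k
      simp only [Set.mem_insert_iff, Set.mem_singleton_iff] at hM
      rcases hM with rfl | rfl | rfl | rfl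
      · rw [← hfa_app, hwfa k]
        exact S.smul_mem _ (hwmemS k)
      · have h1 : ((α₀ : ℂ) * ζ ^ (k : ℕ)) • M.mulVec (w k) = w k := by
          rw [← Matrix.mulVec_smul, ← hwfa k, hfa_app, Matrix.mulVec_mulVec, hA,
            Matrix.one_mulVec]
        have h2 : M.mulVec (w k) = ((α₀ : ℂ) * ζ ^ (k : ℕ))⁻¹ • w k := by
          have h3 : ((α₀ : ℂ) * ζ ^ (k : ℕ))⁻¹ • (((α₀ : ℂ) * ζ ^ (k : ℕ)) • M.mulVec (w k))
              = ((α₀ : ℂ) * ζ ^ (k : ℕ))⁻¹ • w k := by rw [h1]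
          rw [smul_smul, inv_mul_cancel₀ (hc_ne k), one_smul] at h3
          exact h3
        rw [h2]
        exact S.smul_mem _ (hwmemS k)
      · rw [← hfb_app, hwfb k]
        exact S.smul_mem _ (hwmemS (k + 1))
      · have h0 : fb (w (k - 1)) = (μ₀ : ℂ) • w k := by
          rw [hwfb (k - 1), sub_add_cancel]
        have h1 : (μ₀ : ℂ) • M.mulVec (w k) = w (k - 1) := by
          rw [← Matrix.mulVec_smul, ← h0, hfb_app, Matrix.mulVec_mulVec, hB, Matrix.one_mulVec]
        have h2 : M.mulVec (w k) = ((μ₀ : ℂ))⁻¹ • w (k - 1) := by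
          have h3 : ((μ₀ : ℂ))⁻¹ • ((μ₀ : ℂ) • M.mulVec (w k)) = ((μ₀ : ℂ))⁻¹ • w (k - 1) := by
            rw [h1]
          rw [smul_smul, inv_mul_cancel₀ μ₀.ne_zero, one_smul] at h3
          exact h3
        rw [h2]
        exact S.smul_mem _ (hwmemS (k - 1))
    have hSinv : ∀ M ∈ ({A0, A1, B0, B1} : Set (Matrix (Fin N) (Fin N) ℂ)),
        ∀ x ∈ S, M.mulVec x ∈ S := by
      intro M hM x hx
      induction hx using Submodule.span_induction with
      | mem y hy =>
        obtain ⟨k, rfl⟩ := hy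
        exact hgenS M hM k
      | zero => rw [Matrix.mulVec_zero]; exact S.zero_mem
      | add y z _ _ ihy ihz => rw [Matrix.mulVec_add]; exact S.add_mem ihy ihz
      | smul c y _ ihy => rw [Matrix.mulVec_smul]; exact S.smul_mem c ihy
    obtain ⟨T, hTinv, hTW, hSTbot, hSTsup⟩ :=
      exists_inv_complement N _ hss S W hSinv hWinv hSW
    have hfinS : Module.finrank ℂ S = m := by
      rw [hS_def, finrank_span_eq_card hwli, Fintype.card_fin]
    have hranks : Module.finrank ℂ W + 0 = m + Module.finrank ℂ T := by
      rw [← hfinS, ← finrank_bot ℂ (Fin N → ℂ), ← hSTbot, ← hSTsup]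
      exact Submodule.finrank_sup_add_finrank_inf_eq S T
    have hTrank : Module.finrank ℂ T < n := by omega
    obtain ⟨ι', instι', α', μ', e', hmemT, hliT, hspanT, hfaT, hfbT⟩ :=
      IH (Module.finrank ℂ T) (by omega) T rfl hTinv
    -- combine
    refine ⟨ι' ⊕ PUnit, inferInstance, Sum.elim α' (fun _ => α₀), Sum.elim μ' (fun _ => μ₀),
      fun p => Sum.elim (fun i => e' (i, p.2)) (fun _ => w p.2) p.1, ?_, ?_, ?_, ?_, ?_⟩
    · rintro ⟨(i | u), k⟩
      · exact hTW (hmemT (i, k))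
      · exact hwW k
    · -- linear independence
      have hspan_e' : Submodule.span ℂ (Set.range e') ≤ T :=
        Submodule.span_le.mpr (by rintro _ ⟨p, rfl⟩; exact hmemT p)
      have hdisj : Disjoint (Submodule.span ℂ (Set.range e'))
          (Submodule.span ℂ (Set.range (fun q : PUnit × Fin m => w q.2))) := by
        have hr : Set.range (fun q : PUnit × Fin m => w q.2) = Set.range w := by
          ext x
          constructor
          · rintro ⟨⟨u, k⟩, rfl⟩; exact ⟨k, rfl⟩
          · rintro ⟨k, rfl⟩; exact ⟨(PUnit.unit, k), rfl⟩
        rw [hr, ← hS_def]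
        exact Disjoint.mono hspan_e' le_rfl
          (by rw [disjoint_iff, inf_comm, hSTbot])
      have hliw2 : LinearIndependent ℂ (fun q : PUnit × Fin m => w q.2) := by
        have := hwli.comp (fun q : PUnit × Fin m => q.2)
          (fun q q' hq => Prod.ext (Subsingleton.elim _ _) hq)
        exact this
      have hsum : LinearIndependent ℂ (Sum.elim e' (fun q : PUnit × Fin m => w q.2)) :=
        LinearIndependent.sum_type hliT hliw2 hdisj
      have hcomp := hsum.comp (Equiv.sumProdDistrib ι' PUnit (Fin m))
        (Equiv.sumProdDistrib ι' PUnit (Fin m)).injective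
      have he : (fun p : (ι' ⊕ PUnit) × Fin m =>
          Sum.elim (fun i => e' (i, p.2)) (fun _ => w p.2) p.1) =
          (Sum.elim e' (fun q : PUnit × Fin m => w q.2)) ∘
            (Equiv.sumProdDistrib ι' PUnit (Fin m)) := by
        funext p
        obtain ⟨(i | u), k⟩ := p <;> rfl
      rw [he]
      exact hcomp
    · -- span
      rw [← hSTsup]
      apply sup_le
      · apply Submodule.span_le.mpr
        rintro _ ⟨k, rfl⟩
        apply Submodule.subset_span
        exact ⟨(Sum.inr PUnit.unit, k), rfl⟩
      · refine le_trans hspanT (Submodule.span_le.mpr ?_)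
        rintro _ ⟨⟨i, k⟩, rfl⟩
        apply Submodule.subset_span
        exact ⟨(Sum.inl i, k), rfl⟩
    · rintro ⟨(i | u), k⟩
      · exact hfaT (i, k)
      · rw [← hfa_app]; exact hwfa k
    · rintro ⟨(i | u), k⟩
      · exact hfbT (i, k)
      · rw [← hfb_app]; exact hwfb k



lemma mat_eq_of_isEmpty {ι : Type*} [IsEmpty ι] (M1 M2 : Matrix ι ι ℂ) : M1 = M2 := by
  ext i j
  exact isEmptyElim i

lemma comm_of_commutator {n : Type*} [DecidableEq n] [Fintype n] {ζ : ℂ}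
    (u v : (Matrix n n ℂ)ˣ)
    (hc : ((u * v * u⁻¹ * v⁻¹ : (Matrix n n ℂ)ˣ) : Matrix n n ℂ) = ζ • 1) :
    (u : Matrix n n ℂ) * v = ζ • ((v : Matrix n n ℂ) * u) := by
  have h1 : u * v = (u * v * u⁻¹ * v⁻¹) * (v * u) := by group
  calc (u : Matrix n n ℂ) * v = ((u * v : (Matrix n n ℂ)ˣ) : Matrix n n ℂ) := rfl
  _ = ((u * v * u⁻¹ * v⁻¹) * (v * u) : (Matrix n n ℂ)ˣ) := by rw [← h1]
  _ = ((u * v * u⁻¹ * v⁻¹ : (Matrix n n ℂ)ˣ) : Matrix n n ℂ) * ((v * u : (Matrix n n ℂ)ˣ) : Matrix n n ℂ) := rfl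
  _ = (ζ • (1 : Matrix n n ℂ)) * ((v : Matrix n n ℂ) * u) := by rw [hc]; rfl
  _ = ζ • ((v : Matrix n n ℂ) * u) := by rw [smul_mul_assoc, one_mul]

lemma commutator_of_comm {n : Type*} [DecidableEq n] [Fintype n] {ζ : ℂ}
    (u v : (Matrix n n ℂ)ˣ)
    (hc : (u : Matrix n n ℂ) * v = ζ • ((v : Matrix n n ℂ) * u)) :
    ((u * v * u⁻¹ * v⁻¹ : (Matrix n n ℂ)ˣ) : Matrix n n ℂ) = ζ • 1 := by
  have h1 : ((u * v * u⁻¹ * v⁻¹ : (Matrix n n ℂ)ˣ) : Matrix n n ℂ)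
      = (u : Matrix n n ℂ) * v * (↑u⁻¹ : Matrix n n ℂ) * (↑v⁻¹ : Matrix n n ℂ) := rfl
  rw [h1, hc, smul_mul_assoc, smul_mul_assoc]
  congr 1
  calc (v : Matrix n n ℂ) * u * ↑u⁻¹ * ↑v⁻¹
      = (v : Matrix n n ℂ) * (↑u * ↑u⁻¹) * ↑v⁻¹ := by congr 1; rw [mul_assoc]
  _ = 1 := by rw [u.mul_inv, mul_one, v.mul_inv]

lemma fin_add_one_val {m : ℕ} [NeZero m] (k : Fin m) :
    ((k + 1 : Fin m) : ℕ) = ((k : ℕ) + 1) % m := by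
  rw [Fin.add_def, Fin.val_one']
  conv_rhs => rw [Nat.add_mod]
  rw [Nat.mod_eq_of_lt k.isLt]

lemma zeta_mul_pow_sub {m : ℕ} [NeZero m] {ζ : ℂ} (hζ : IsPrimitiveRoot ζ m) (k : Fin m) :
    ζ * ζ ^ (((k - 1 : Fin m)) : ℕ) = ζ ^ (k : ℕ) := by
  have hm : 0 < m := Nat.pos_of_ne_zero (NeZero.ne m)
  set t : Fin m := k - 1 with ht
  have htk : t + 1 = k := sub_add_cancel k 1
  have hval : ((t + 1 : Fin m) : ℕ) = ((t : ℕ) + 1) % m := fin_add_one_val t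
  rw [htk] at hval
  by_cases hc : (t : ℕ) + 1 = m
  · rw [hval, hc, Nat.mod_self, pow_zero, ← pow_succ', hc, hζ.pow_eq_one]
  · rw [hval, Nat.mod_eq_of_lt (by have := t.isLt; omega), pow_succ']

end RedPair

set_option maxHeartbeats 1000000 in
/-- Every reductive `c`-pair in `GL(n,ℂ)` (with `c = ζ·I`, `ζ` of exact order `m`,
`n = h·m`) is conjugate to a pair of Kronecker products `(d₁ ⊗ P, d₂ ⊗ Q)` with
`d₁, d₂` invertible diagonal `h×h` matrices and `(P,Q)` a pair in `GL(m,ℂ)` with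
commutator `ζ·Iₘ`. -/
theorem reductive_pair_conjugate_to_kronecker_GL
    (m h : ℕ) (ζ : ℂ) (hζ : IsPrimitiveRoot ζ m)
    (a b : GL (Fin (h * m)) ℂ)
    (hab : ((a * b * a⁻¹ * b⁻¹ : GL (Fin (h * m)) ℂ) :
        Matrix (Fin (h * m)) (Fin (h * m)) ℂ)
        = ζ • (1 : Matrix (Fin (h * m)) (Fin (h * m)) ℂ))
    (hsemisimple : IsSemisimpleRing
      (Algebra.adjoin ℂ ({(a : Matrix (Fin (h * m)) (Fin (h * m)) ℂ),
        ((a⁻¹ : GL (Fin (h * m)) ℂ) : Matrix (Fin (h * m)) (Fin (h * m)) ℂ),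
        (b : Matrix (Fin (h * m)) (Fin (h * m)) ℂ),
        ((b⁻¹ : GL (Fin (h * m)) ℂ) : Matrix (Fin (h * m)) (Fin (h * m)) ℂ)} :
        Set (Matrix (Fin (h * m)) (Fin (h * m)) ℂ)))) :
    ∃ (g : GL (Fin (h * m)) ℂ)
      (d₁ d₂ : Matrix (Fin h) (Fin h) ℂ)
      (P Q : GL (Fin m) ℂ),
      IsUnit d₁ ∧ IsUnit d₂ ∧ d₁.IsDiag ∧ d₂.IsDiag ∧
      ((P * Q * P⁻¹ * Q⁻¹ : GL (Fin m) ℂ) : Matrix (Fin m) (Fin m) ℂ)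
        = ζ • (1 : Matrix (Fin m) (Fin m) ℂ) ∧
      ((g * a * g⁻¹ : GL (Fin (h * m)) ℂ) : Matrix (Fin (h * m)) (Fin (h * m)) ℂ)
        = Matrix.reindex finProdFinEquiv finProdFinEquiv
            (d₁ ⊗ₖ (P : Matrix (Fin m) (Fin m) ℂ)) ∧
      ((g * b * g⁻¹ : GL (Fin (h * m)) ℂ) : Matrix (Fin (h * m)) (Fin (h * m)) ℂ)
        = Matrix.reindex finProdFinEquiv finProdFinEquiv
            (d₂ ⊗ₖ (Q : Matrix (Fin m) (Fin m) ℂ)) := by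
  classical
  rcases Nat.eq_zero_or_pos m with hm0 | hm
  · subst hm0
    haveI hie : IsEmpty (Fin (h * 0)) := by
      rw [Nat.mul_zero]; infer_instance
    exact ⟨1, 1, 1, 1, 1, isUnit_one, isUnit_one, Matrix.isDiag_one, Matrix.isDiag_one,
      RedPair.mat_eq_of_isEmpty _ _, RedPair.mat_eq_of_isEmpty _ _,
      RedPair.mat_eq_of_isEmpty _ _⟩
  · haveI : NeZero m := ⟨hm.ne'⟩
    set A0 : Matrix (Fin (h * m)) (Fin (h * m)) ℂ := (a : Matrix (Fin (h * m)) (Fin (h * m)) ℂ)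
      with hA0
    set A1 : Matrix (Fin (h * m)) (Fin (h * m)) ℂ :=
      ((a⁻¹ : GL (Fin (h * m)) ℂ) : Matrix (Fin (h * m)) (Fin (h * m)) ℂ) with hA1
    set B0 : Matrix (Fin (h * m)) (Fin (h * m)) ℂ := (b : Matrix (Fin (h * m)) (Fin (h * m)) ℂ)
      with hB0
    set B1 : Matrix (Fin (h * m)) (Fin (h * m)) ℂ :=
      ((b⁻¹ : GL (Fin (h * m)) ℂ) : Matrix (Fin (h * m)) (Fin (h * m)) ℂ) with hB1
    have hA : A1 * A0 = 1 := a.inv_mul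
    have hB : B1 * B0 = 1 := b.inv_mul
    have hcommM : A0 * B0 = ζ • (B0 * A0) := RedPair.comm_of_commutator a b hab
    obtain ⟨ι, instι, α, μ, e, hmem, hli, hspan, hfaE, hfbE⟩ :=
      RedPair.decomp_aux hζ A0 A1 B0 B1 hsemisimple hA hB hcommM
        (Module.finrank ℂ (⊤ : Submodule ℂ (Fin (h * m) → ℂ))) ⊤ rfl
        (fun M _ x _ => Submodule.mem_top)
    haveI := instι
    have hspan' : ⊤ ≤ Submodule.span ℂ (Set.range e) := le_trans le_top hspan
    let Bas : Module.Basis (ι × Fin m) ℂ (Fin (h * m) → ℂ) := Module.Basis.mk hli hspan'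
    have hcard : Fintype.card ι * m = h * m := by
      have h1 := Module.finrank_eq_card_basis Bas
      rw [Module.finrank_fintype_fun_eq_card, Fintype.card_fin, Fintype.card_prod,
        Fintype.card_fin] at h1
      omega
    have hcardι : Fintype.card ι = h := Nat.eq_of_mul_eq_mul_right hm hcard
    let σ : Fin h ≃ ι := (Fintype.equivFinOfCardEq hcardι).symm
    set e2 : Fin h × Fin m → (Fin (h * m) → ℂ) := fun p => e (σ p.1, p.2) with he2
    set α2 : Fin h → ℂˣ := fun i => α (σ i) with hα2
    set μ2 : Fin h → ℂˣ := fun i => μ (σ i) with hμ2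
    have hee : e2 = e ∘ (Equiv.prodCongr σ (Equiv.refl (Fin m))) := rfl
    have hli2 : LinearIndependent ℂ e2 := by
      rw [hee]; exact hli.comp _ (Equiv.injective _)
    have hspan2 : ⊤ ≤ Submodule.span ℂ (Set.range e2) := by
      rw [hee, Set.range_comp, Equiv.range_eq_univ, Set.image_univ]
      exact hspan'
    have hfa2 : ∀ p : Fin h × Fin m, A0.mulVec (e2 p) = ((α2 p.1 : ℂ) * ζ ^ ((p.2 : ℕ))) • e2 p :=
      fun p => hfaE (σ p.1, p.2)
    have hfb2 : ∀ p : Fin h × Fin m, B0.mulVec (e2 p) = (μ2 p.1 : ℂ) • e2 (p.1, p.2 + 1) :=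
      fun p => hfbE (σ p.1, p.2)
    let Bas2 : Module.Basis (Fin h × Fin m) ℂ (Fin (h * m) → ℂ) := Module.Basis.mk hli2 hspan2
    let Bas3 : Module.Basis (Fin (h * m)) ℂ (Fin (h * m) → ℂ) := Bas2.reindex finProdFinEquiv
    set Cmat : Matrix (Fin (h * m)) (Fin (h * m)) ℂ :=
      (Pi.basisFun ℂ (Fin (h * m))).toMatrix ⇑Bas3 with hCdef
    haveI hCinv : Invertible Cmat := (Pi.basisFun ℂ (Fin (h * m))).invertibleToMatrix Bas3
    have hC : ∀ i j, Cmat i j = e2 (finProdFinEquiv.symm j) i := by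
      intro i j
      rw [hCdef, Module.Basis.toMatrix_apply, Pi.basisFun_repr, Module.Basis.reindex_apply, Module.Basis.mk_apply]
    set uC : (Matrix (Fin (h * m)) (Fin (h * m)) ℂ)ˣ := unitOfInvertible Cmat with huC
    have huCval : (uC : Matrix (Fin (h * m)) (Fin (h * m)) ℂ) = Cmat := rfl
    set P0 : Matrix (Fin m) (Fin m) ℂ := Matrix.diagonal (fun k : Fin m => ζ ^ (k : ℕ)) with hP0
    set Q0 : Matrix (Fin m) (Fin m) ℂ := Equiv.Perm.permMatrix ℂ (Equiv.subRight (1 : Fin m)) with hQ0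
    have hζ0 : ζ ≠ 0 := fun h0 => one_ne_zero (α := ℂ)
      (by rw [← hζ.pow_eq_one, h0, zero_pow hm.ne'])
    have hP0u : IsUnit P0 := by
      rw [Matrix.isUnit_iff_isUnit_det, hP0, Matrix.det_diagonal, isUnit_iff_ne_zero]
      exact Finset.prod_ne_zero_iff.mpr fun k _ => pow_ne_zero _ hζ0
    have hQ0u : IsUnit Q0 := by
      rw [Matrix.isUnit_iff_isUnit_det, hQ0, Matrix.det_permutation]
      rcases Int.units_eq_one_or (Equiv.Perm.sign (Equiv.subRight (1 : Fin m))) with hs | hs <;>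
        rw [hs] <;> simp
    obtain ⟨P, hP⟩ := hP0u
    obtain ⟨Q, hQ⟩ := hQ0u
    have hQ0app : ∀ k l : Fin m, Q0 k l = if k - 1 = l then 1 else 0 := by
      intro k l
      rw [hQ0]
      simp [Equiv.Perm.permMatrix, PEquiv.toMatrix_apply, Equiv.toPEquiv_apply,
        Equiv.subRight_apply, Option.mem_def]
    have hPQ : P0 * Q0 = ζ • (Q0 * P0) := by
      ext k l
      rw [hP0, Matrix.diagonal_mul, Matrix.smul_apply, Matrix.mul_diagonal, hQ0app,
        smul_eq_mul]
      by_cases hkl : k - 1 = l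
      · rw [if_pos hkl, ← hkl, mul_one]
        rw [← RedPair.zeta_mul_pow_sub hζ k]
        ring
      · rw [if_neg hkl]
        ring
    have hPQcomm : ((P * Q * P⁻¹ * Q⁻¹ : GL (Fin m) ℂ) : Matrix (Fin m) (Fin m) ℂ)
        = ζ • (1 : Matrix (Fin m) (Fin m) ℂ) :=
      RedPair.commutator_of_comm P Q (by rw [hP, hQ]; exact hPQ)
    set d1 : Matrix (Fin h) (Fin h) ℂ := Matrix.diagonal (fun i => (α2 i : ℂ)) with hd1
    set d2 : Matrix (Fin h) (Fin h) ℂ := Matrix.diagonal (fun i => (μ2 i : ℂ)) with hd2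
    have hd1u : IsUnit d1 := by
      rw [Matrix.isUnit_iff_isUnit_det, hd1, Matrix.det_diagonal, isUnit_iff_ne_zero]
      exact Finset.prod_ne_zero_iff.mpr fun i _ => (α2 i).ne_zero
    have hd2u : IsUnit d2 := by
      rw [Matrix.isUnit_iff_isUnit_det, hd2, Matrix.det_diagonal, isUnit_iff_ne_zero]
      exact Finset.prod_ne_zero_iff.mpr fun i _ => (μ2 i).ne_zero
    have hKa : Matrix.reindex finProdFinEquiv finProdFinEquiv (d1 ⊗ₖ P0)
        = Matrix.diagonal (fun j : Fin (h * m) =>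
            (α2 (finProdFinEquiv.symm j).1 : ℂ) * ζ ^ (((finProdFinEquiv.symm j).2 : ℕ))) := by
      rw [hd1, hP0, Matrix.diagonal_kronecker_diagonal, Matrix.reindex_apply,
        Matrix.submatrix_diagonal _ _ finProdFinEquiv.symm.injective]
      rfl
    have hAC : A0 * Cmat = Cmat * Matrix.reindex finProdFinEquiv finProdFinEquiv (d1 ⊗ₖ P0) := by
      rw [hKa]
      ext i j
      rw [Matrix.mul_diagonal]
      have hcol : (A0 * Cmat) i j = (A0.mulVec (e2 (finProdFinEquiv.symm j))) i := by
        simp only [Matrix.mul_apply, Matrix.mulVec, dotProduct, hC]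
      rw [hcol, hfa2]
      rw [Pi.smul_apply, hC, smul_eq_mul]
      ring
    have hKbapp : ∀ (q pp : Fin h × Fin m), (d2 ⊗ₖ Q0) q pp
        = (if q.1 = pp.1 then (μ2 q.1 : ℂ) else 0) * (if q.2 - 1 = pp.2 then 1 else 0) := by
      intro q pp
      rw [Matrix.kroneckerMap_apply, hd2, Matrix.diagonal_apply, hQ0app]
    have hBC : B0 * Cmat = Cmat * Matrix.reindex finProdFinEquiv finProdFinEquiv (d2 ⊗ₖ Q0) := by
      ext i j
      set pp := finProdFinEquiv.symm j with hpp
      have hL : (B0 * Cmat) i j = (μ2 pp.1 : ℂ) * e2 (pp.1, pp.2 + 1) i := by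
        have h5 : (B0 * Cmat) i j = (B0.mulVec (e2 pp)) i := by
          simp only [Matrix.mul_apply, Matrix.mulVec, dotProduct, hC, ← hpp]
        rw [h5, hfb2, Pi.smul_apply, smul_eq_mul]
      have hR : (Cmat * Matrix.reindex finProdFinEquiv finProdFinEquiv (d2 ⊗ₖ Q0)) i j
          = ∑ q : Fin h × Fin m, e2 q i *
            ((if q.1 = pp.1 then (μ2 q.1 : ℂ) else 0) * (if q.2 - 1 = pp.2 then 1 else 0)) := by
        rw [Matrix.mul_apply]
        rw [← Equiv.sum_comp finProdFinEquiv
          (fun k => Cmat i k * (Matrix.reindex finProdFinEquiv finProdFinEquiv (d2 ⊗ₖ Q0)) k j)]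
        apply Finset.sum_congr rfl
        intro q _
        rw [hC, Matrix.reindex_apply, Matrix.submatrix_apply, Equiv.symm_apply_apply, hKbapp]
      rw [hL, hR, Finset.sum_eq_single (pp.1, pp.2 + 1)]
      · rw [if_pos rfl, if_pos (by rw [add_sub_cancel_right])]
        ring
      · intro q _ hq
        rcases eq_or_ne q.1 pp.1 with h6 | h6
        · have h7 : q.2 - 1 ≠ pp.2 := by
            intro h8
            apply hq
            have h9 : q.2 = pp.2 + 1 := by rw [← h8, sub_add_cancel]
            exact Prod.ext h6 h9
          rw [if_neg h7]
          ring
        · rw [if_neg h6]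
          ring
      · intro hmem'
        exact absurd (Finset.mem_univ _) hmem'
    refine ⟨uC⁻¹, d1, d2, P, Q, hd1u, hd2u, Matrix.isDiag_diagonal _, Matrix.isDiag_diagonal _,
      hPQcomm, ?_, ?_⟩
    · rw [hP]
      have h10 : (uC⁻¹ * a * (uC⁻¹)⁻¹ : GL (Fin (h * m)) ℂ) = uC⁻¹ * a * uC := by rw [inv_inv]
      rw [h10]
      have h11 : ((uC⁻¹ * a * uC : GL (Fin (h * m)) ℂ) : Matrix (Fin (h * m)) (Fin (h * m)) ℂ)
          = (↑uC⁻¹ : Matrix (Fin (h * m)) (Fin (h * m)) ℂ) * A0 * Cmat := rfl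
      rw [h11, mul_assoc, hAC, ← mul_assoc]
      have h12 : (↑uC⁻¹ : Matrix (Fin (h * m)) (Fin (h * m)) ℂ) * Cmat = 1 := uC.inv_mul
      rw [h12, one_mul]
    · rw [hQ]
      have h10 : (uC⁻¹ * b * (uC⁻¹)⁻¹ : GL (Fin (h * m)) ℂ) = uC⁻¹ * b * uC := by rw [inv_inv]
      rw [h10]
      have h11 : ((uC⁻¹ * b * uC : GL (Fin (h * m)) ℂ) : Matrix (Fin (h * m)) (Fin (h * m)) ℂ)
          = (↑uC⁻¹ : Matrix (Fin (h * m)) (Fin (h * m)) ℂ) * B0 * Cmat := rfl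
      rw [h11, mul_assoc, hBC, ← mul_assoc]
      have h12 : (↑uC⁻¹ : Matrix (Fin (h * m)) (Fin (h * m)) ℂ) * Cmat = 1 := uC.inv_mul
      rw [h12, one_mul]
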